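/- For all integers s ≥ 1 and n ≥ 2s + 5 one has (n+2s)/(n−2s) < (n+1)^{2s/n}, where the right-hand side denotes the real power exp((2s/n)·log(n+1)). -/

import Mathlib

set_option maxHeartbeats 1000000

/-- If `a ^ m < b ^ k` with `a ≥ 0`, `b ≥ 1`, `m > 0`, then `a < b ^ (k/m)`. -/
lemma stmt6_key (a b : ℝ) (m k : ℕ) (q : ℝ) (ha : 0 ≤ a) (hb : 1 ≤ b) (hm : 0 < m)
    (hq : q = (k : ℝ) / (m : ℝ)) (h : a ^ m < b ^ k) : a < b ^ q := by
  have hb0 : (0 : ℝ) < b := lt_of_lt_of_le one_pos hb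
  have hbq : (b ^ q) ^ m = b ^ k := by
    rw [hq, ← Real.rpow_natCast (b ^ ((k : ℝ) / (m : ℝ))) m, ← Real.rpow_mul hb0.le,
      div_mul_cancel₀ _ (Nat.cast_ne_zero.mpr hm.ne' : ((m : ℝ) ≠ 0)), Real.rpow_natCast]
  refine lt_of_pow_lt_pow_left₀ m ?_ ?_
  · positivity
  · rw [hbq]; exact h

/-- For integers `s ≥ 1` and `n ≥ 2s + 5`, `(n+2s)/(n-2s) < (n+1)^(2s/n)`. -/
theorem stmt6 (s n : ℕ) (hs : 1 ≤ s) (hn : 2 * s + 5 ≤ n) :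
    ((n : ℝ) + 2 * s) / ((n : ℝ) - 2 * s) < ((n : ℝ) + 1) ^ (2 * (s : ℝ) / (n : ℝ)) := by
  have hsR : (1 : ℝ) ≤ (s : ℝ) := by exact_mod_cast hs
  have hnR : 2 * (s : ℝ) + 5 ≤ (n : ℝ) := by exact_mod_cast hn
  rcases le_or_gt n 15 with h15 | h16
  · -- finitely many small cases
    refine stmt6_key _ _ n (2 * s) _ ?_ ?_ ?_ ?_ ?_
    · apply div_nonneg <;> linarith
    · linarith
    · omega
    · push_cast; ring
    · have hs5 : s ≤ 5 := by omega
      clear hsR hnR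
      interval_cases s <;> interval_cases n <;> norm_num
  · -- large case: n ≥ 16
    have hn16 : (16 : ℝ) ≤ (n : ℝ) := by exact_mod_cast h16
    set N : ℝ := (n : ℝ) with hN_def
    set S : ℝ := (s : ℝ) with hS_def
    have hN0 : (0 : ℝ) < N := by linarith
    have hden : (0 : ℝ) < N - 2 * S := by linarith
    have hnum : (0 : ℝ) < N + 2 * S := by linarith
    set t : ℝ := 2 * S / N with ht_def
    have ht0 : 0 < t := by
      apply div_pos (by linarith) hN0
    have h1t : 1 - t = (N - 2 * S) / N := by
      rw [ht_def]; field_simp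
    have h1pt : 1 + t = (N + 2 * S) / N := by
      rw [ht_def]; field_simp
    have h1t0 : 0 < 1 - t := by rw [h1t]; positivity
    have h1pt0 : 0 < 1 + t := by linarith
    set T : ℝ := (N - 5) / N with hT_def
    have hN5 : (0 : ℝ) < N - 5 := by linarith
    have hT0 : 0 < T := div_pos hN5 hN0
    have h1T : 1 - T = 5 / N := by rw [hT_def]; field_simp; ring
    have h1T0 : 0 < 1 - T := by rw [h1T]; positivity
    have htT : t ≤ T := by
      rw [ht_def, hT_def]
      gcongr <;> linarith
    set u : ℝ := t / T with hu_def
    have hu0 : 0 < u := div_pos ht0 hT0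
    have hu1 : u ≤ 1 := (div_le_one hT0).mpr htT
    have hut : u * T = t := div_mul_cancel₀ t hT0.ne'
    -- Bernoulli / weighted AM-GM : (1-T)^u ≤ 1 - t
    have hgm : (1 - T) ^ u * (1 : ℝ) ^ (1 - u) ≤ u * (1 - T) + (1 - u) * 1 :=
      Real.geom_mean_le_arith_mean2_weighted hu0.le (by linarith) h1T0.le zero_le_one (by ring)
    have hgm' : (1 - T) ^ u ≤ 1 - t := by
      rw [Real.one_rpow, mul_one] at hgm
      have e : u * (1 - T) + (1 - u) * 1 = 1 - t := by rw [← hut]; ring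
      linarith [e ▸ hgm]
    have hlog1 : u * Real.log (1 - T) ≤ Real.log (1 - t) := by
      have h := Real.log_le_log (Real.rpow_pos_of_pos h1T0 u) hgm'
      rwa [Real.log_rpow h1T0] at h
    have hlog2 : Real.log (1 + t) ≤ t := by
      have := Real.log_le_sub_one_of_pos h1pt0; linarith
    have hl1T : Real.log (1 - T) = Real.log 5 - Real.log N := by
      rw [h1T, Real.log_div (by norm_num) hN0.ne']
    -- numeric log facts
    have hlog2lb : (0.6931471803 : ℝ) < Real.log 2 := Real.log_two_gt_d9
    have hlog2ub : Real.log 2 < 0.6931471808 := Real.log_two_lt_d9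
    have hl5 : (1.586 : ℝ) ≤ Real.log 5 := by
      have h45 : (1 / 5 : ℝ) ≤ Real.log (5 / 4) := by
        have h1 := Real.log_le_sub_one_of_pos (show (0 : ℝ) < 4 / 5 by norm_num)
        have e : Real.log ((4 : ℝ) / 5) = -Real.log (5 / 4) := by
          rw [show ((4 : ℝ) / 5) = (5 / 4 : ℝ)⁻¹ by norm_num, Real.log_inv]
        rw [e] at h1; linarith
      have e5 : Real.log 5 = 2 * Real.log 2 + Real.log (5 / 4) := by
        rw [show (5 : ℝ) = 2 ^ 2 * (5 / 4) by norm_num,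
          Real.log_mul (by norm_num) (by norm_num), Real.log_pow]
        push_cast; ring
      linarith
    have hl17 : Real.log 17 ≤ 2.836 := by
      have h1716 : Real.log ((17 : ℝ) / 16) ≤ 1 / 16 := by
        have := Real.log_le_sub_one_of_pos (show (0 : ℝ) < 17 / 16 by norm_num); linarith
      have e17 : Real.log 17 = 4 * Real.log 2 + Real.log (17 / 16) := by
        rw [show (17 : ℝ) = 2 ^ 4 * (17 / 16) by norm_num,
          Real.log_mul (by norm_num) (by norm_num), Real.log_pow]
        push_cast; ring
      linarith
    have hB17 : Real.log (N + 1) ≤ Real.log 17 + (N + 1) / 17 - 1 := by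
      have e : Real.log (N + 1) = Real.log 17 + Real.log ((N + 1) / 17) := by
        rw [show N + 1 = 17 * ((N + 1) / 17) by ring, Real.log_mul (by norm_num) (by positivity)]
        ring_nf
      have h := Real.log_le_sub_one_of_pos (show (0 : ℝ) < (N + 1) / 17 by positivity)
      linarith
    have hAB : Real.log N < Real.log (N + 1) := Real.log_lt_log hN0 (by linarith)
    -- main numeric inequality
    have hNl5 : N * 1.586 ≤ N * Real.log 5 := mul_le_mul_of_nonneg_left hl5 hN0.le
    have hstar : 5 * Real.log (N + 1) < N * (Real.log 5 - 1) + 5 := by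
      nlinarith [hB17, hl17, hn16, hNl5]
    have hstar2 : Real.log N - Real.log 5 < T * (Real.log (N + 1) - 1) := by
      have h1 : N * (Real.log N - Real.log 5) < (N - 5) * (Real.log (N + 1) - 1) := by
        nlinarith [mul_lt_mul_of_pos_left hAB hN0, hstar]
      rw [hT_def, div_mul_eq_mul_div, lt_div_iff₀ hN0]
      nlinarith [h1]
    have h4 : -Real.log (1 - t) ≤ u * (Real.log N - Real.log 5) := by
      have h := hlog1
      rw [hl1T] at h
      have e : u * (Real.log 5 - Real.log N) = -(u * (Real.log N - Real.log 5)) := by ring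
      rw [e] at h; linarith
    have hfin : Real.log (1 + t) - Real.log (1 - t) < t * Real.log (N + 1) := by
      have h2 : u * (Real.log N - Real.log 5) < u * (T * (Real.log (N + 1) - 1)) :=
        mul_lt_mul_of_pos_left hstar2 hu0
      have h3 : u * (T * (Real.log (N + 1) - 1)) = t * Real.log (N + 1) - t := by
        rw [← hut]; ring
      linarith [hlog2, h4, h2, h3.le, h3.ge]
    -- exponentiate
    have hq : (N + 2 * S) / (N - 2 * S) = (1 + t) / (1 - t) := by
      rw [h1pt, h1t]
      field_simp
    rw [hq]
    have hlt : 0 < (1 + t) / (1 - t) := div_pos h1pt0 h1t0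
    rw [← Real.exp_log hlt, Real.rpow_def_of_pos (by linarith : (0 : ℝ) < N + 1)]
    apply Real.exp_lt_exp.mpr
    rw [Real.log_div h1pt0.ne' h1t0.ne']
    linarith [hfin]
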